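/- Let H ∈ (0, 1/2) and t₀ > 0. Then there exists a constant c(t₀, H) < ∞ such that for every real s ≥ t₀ and every integer n ≥ 1: ∫₀^{2n²s} (s − v/(2n²))^{2H−1} · v^{2H−1} · e^{−v} dv ≤ c(t₀, H). -/

import Mathlib

open Real intervalIntegral

set_option maxHeartbeats 1000000 in
open MeasureTheory Set in
/-- Lemma A.2 (technical integral bound). -/
theorem stmt_5 (H t₀ : ℝ) (hH0 : 0 < H) (hH1 : H < 1 / 2) (ht₀ : 0 < t₀) :
    ∃ c : ℝ, ∀ s : ℝ, t₀ ≤ s → ∀ n : ℕ, 1 ≤ n →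
      (∫ v in (0:ℝ)..(2 * (n : ℝ) ^ 2 * s),
          (s - v / (2 * (n : ℝ) ^ 2)) ^ (2 * H - 1) * v ^ (2 * H - 1) * Real.exp (-v)) ≤ c := by
  set r : ℝ := 2 * H - 1 with hr
  have hr0 : r ≤ 0 := by simp [hr]; linarith
  have hrneg1 : (-1 : ℝ) < r := by simp [hr]; linarith
  have hr1 : r + 1 = 2 * H := by ring
  have h2H : 0 < 2 * H := by linarith
  set A : ℝ := (t₀ / 2) ^ r with hA
  have hApos : 0 < A := Real.rpow_pos_of_pos (by linarith) r
  refine ⟨A * Real.Gamma (2 * H) + (t₀ ^ r) ^ 2 / H, ?_⟩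
  intro s hs n hn
  have hspos : 0 < s := lt_of_lt_of_le ht₀ hs
  set c₂ : ℝ := 2 * (n : ℝ) ^ 2 with hc₂
  have hn1 : (1 : ℝ) ≤ (n : ℝ) := by exact_mod_cast hn
  have hc₂pos : 0 < c₂ := by positivity
  have hc₂2 : (2 : ℝ) ≤ c₂ := by nlinarith
  set T : ℝ := c₂ * s with hT
  have hTpos : 0 < T := by positivity
  set B : ℝ := t₀ ^ r * Real.exp (-((n : ℝ) ^ 2 * s)) with hB
  have hBpos : 0 < B := by positivity
  set f : ℝ → ℝ := fun v => (s - v / c₂) ^ r * v ^ r * Real.exp (-v) with hf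
  set g : ℝ → ℝ := fun v => A * (Real.exp (-v) * v ^ r) + B * (s - v / c₂) ^ r with hg
  -- integrability of the pieces of g
  have hg1 : IntervalIntegrable (fun v => Real.exp (-v) * v ^ r) volume 0 T := by
    rw [intervalIntegrable_iff_integrableOn_Ioc_of_le hTpos.le]
    have h := Real.GammaIntegral_convergent h2H
    rw [← hr] at h
    exact h.mono_set Ioc_subset_Ioi_self
  have hg2 : IntervalIntegrable (fun v => (s - v / c₂) ^ r) volume 0 T := by
    have h1 : IntervalIntegrable (fun x : ℝ => x ^ r) volume 0 s :=
      intervalIntegrable_rpow' hrneg1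
    have h2 : IntervalIntegrable (fun x : ℝ => (s - x) ^ r) volume (s - 0) (s - s) :=
      h1.comp_sub_left s
    have h3 : IntervalIntegrable (fun x : ℝ => (s - x * c₂⁻¹) ^ r) volume
        ((s - 0) / c₂⁻¹) ((s - s) / c₂⁻¹) := h2.comp_mul_right (c := c₂⁻¹)
    have e1 : (s - 0) / c₂⁻¹ = T := by field_simp [hT]; ring
    have e2 : (s - s) / c₂⁻¹ = 0 := by simp
    rw [e1, e2] at h3
    have : (fun x : ℝ => (s - x * c₂⁻¹) ^ r) = fun x : ℝ => (s - x / c₂) ^ r := by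
      funext x; rw [div_eq_mul_inv]
    rw [this] at h3
    exact h3.symm
  have hgint : IntervalIntegrable g volume 0 T :=
    ((hg1.const_mul A).add (hg2.const_mul B))
  -- pointwise bound f ≤ g on Icc 0 T
  have hbound : ∀ v ∈ Icc (0:ℝ) T, f v ≤ g v := by
    intro v hv
    obtain ⟨hv0, hvT⟩ := hv
    have hbase : 0 ≤ s - v / c₂ := by
      rw [sub_nonneg, div_le_iff₀ hc₂pos]
      linarith [hvT]
    have hns : t₀ ≤ (n : ℝ) ^ 2 * s := by nlinarith
    rcases le_total v ((n : ℝ) ^ 2 * s) with hcase | hcase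
    · -- v ≤ n² s : first factor bounded by A
      have hvc : v / c₂ ≤ s / 2 := by
        rw [div_le_div_iff₀ hc₂pos (by norm_num : (0:ℝ) < 2)]
        calc v * 2 ≤ ((n:ℝ)^2 * s) * 2 := by linarith
          _ = s * c₂ := by rw [hc₂]; ring
      have hb2 : t₀ / 2 ≤ s - v / c₂ := by
        have : t₀ / 2 ≤ s / 2 := by linarith
        linarith
      have h1 : (s - v / c₂) ^ r ≤ A :=
        Real.rpow_le_rpow_of_nonpos (by linarith) hb2 hr0
      have : f v ≤ A * (Real.exp (-v) * v ^ r) := by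
        rw [hf]
        have hvr : (0:ℝ) ≤ v ^ r := Real.rpow_nonneg hv0 r
        have hev : (0:ℝ) ≤ Real.exp (-v) := (Real.exp_pos _).le
        calc (s - v / c₂) ^ r * v ^ r * Real.exp (-v)
            ≤ A * v ^ r * Real.exp (-v) := by
              apply mul_le_mul_of_nonneg_right (mul_le_mul_of_nonneg_right h1 hvr) hev
          _ = A * (Real.exp (-v) * v ^ r) := by ring
      refine this.trans ?_
      rw [hg]
      have : 0 ≤ B * (s - v / c₂) ^ r :=
        mul_nonneg hBpos.le (Real.rpow_nonneg hbase r)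
      linarith
    · -- n² s ≤ v
      have ht₀v : t₀ ≤ v := le_trans hns hcase
      have h1 : v ^ r ≤ t₀ ^ r := Real.rpow_le_rpow_of_nonpos ht₀ ht₀v hr0
      have h2 : Real.exp (-v) ≤ Real.exp (-((n : ℝ) ^ 2 * s)) :=
        Real.exp_le_exp.2 (by linarith)
      have hbr : (0:ℝ) ≤ (s - v / c₂) ^ r := Real.rpow_nonneg hbase r
      have : f v ≤ B * (s - v / c₂) ^ r := by
        rw [hf, hB]
        calc (s - v / c₂) ^ r * v ^ r * Real.exp (-v)
            ≤ (s - v / c₂) ^ r * t₀ ^ r * Real.exp (-((n:ℝ)^2 * s)) := by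
              apply mul_le_mul (mul_le_mul_of_nonneg_left h1 hbr) h2 (Real.exp_pos _).le
              positivity
          _ = t₀ ^ r * Real.exp (-((n : ℝ) ^ 2 * s)) * (s - v / c₂) ^ r := by ring
      refine this.trans ?_
      rw [hg]
      have : 0 ≤ A * (Real.exp (-v) * v ^ r) := by
        have := Real.rpow_nonneg hv0 r
        positivity
      linarith
  -- f is interval integrable
  have hfm : AEStronglyMeasurable f (volume.restrict (Set.uIoc (0:ℝ) T)) := by
    apply Measurable.aestronglyMeasurable
    rw [hf]
    fun_prop
  have hfnonneg : ∀ v ∈ Icc (0:ℝ) T, 0 ≤ f v := by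
    intro v hv
    obtain ⟨hv0, hvT⟩ := hv
    have hbase : 0 ≤ s - v / c₂ := by
      rw [sub_nonneg, div_le_iff₀ hc₂pos]; linarith
    exact mul_nonneg (mul_nonneg (Real.rpow_nonneg hbase r) (Real.rpow_nonneg hv0 r))
      (Real.exp_pos _).le
  have hIoc : Set.uIoc (0:ℝ) T = Ioc 0 T := uIoc_of_le hTpos.le
  have hfint : IntervalIntegrable f volume 0 T := by
    apply hgint.mono_fun' hfm
    rw [hIoc]
    refine (ae_restrict_iff' measurableSet_Ioc).2 (Filter.Eventually.of_forall ?_)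
    intro v hv
    have hv' : v ∈ Icc (0:ℝ) T := Ioc_subset_Icc_self hv
    show ‖f v‖ ≤ g v
    rw [Real.norm_eq_abs, abs_of_nonneg (hfnonneg v hv')]
    exact hbound v hv'
  -- the integral of f is at most the integral of g
  have hmono : (∫ v in (0:ℝ)..T, f v) ≤ ∫ v in (0:ℝ)..T, g v :=
    integral_mono_on hTpos.le hfint hgint hbound
  -- compute / bound the integral of g
  have hgsplit : (∫ v in (0:ℝ)..T, g v)
      = A * (∫ v in (0:ℝ)..T, Real.exp (-v) * v ^ r)
        + B * ∫ v in (0:ℝ)..T, (s - v / c₂) ^ r := by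
    rw [hg, integral_add (hg1.const_mul A) (hg2.const_mul B),
      intervalIntegral.integral_const_mul, intervalIntegral.integral_const_mul]
  have hI1 : (∫ v in (0:ℝ)..T, Real.exp (-v) * v ^ r) ≤ Real.Gamma (2 * H) := by
    rw [Real.Gamma_eq_integral h2H, intervalIntegral.integral_of_le hTpos.le, ← hr]
    apply setIntegral_mono_set (by rw [← hr] at *; exact Real.GammaIntegral_convergent h2H)
    · refine (ae_restrict_iff' measurableSet_Ioi).2 (Filter.Eventually.of_forall ?_)
      intro x hx
      have : (0:ℝ) < x := hx
      positivity
    · exact HasSubset.Subset.eventuallyLE Ioc_subset_Ioi_self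
  have hI2 : (∫ v in (0:ℝ)..T, (s - v / c₂) ^ r) = c₂ * (s ^ (2 * H) / (2 * H)) := by
    have step1 : (∫ v in (0:ℝ)..T, (s - v / c₂) ^ r)
        = c₂ • ∫ u in (0:ℝ)/c₂..T/c₂, (s - u) ^ r :=
      intervalIntegral.integral_comp_div (f := fun u => (s - u) ^ r) hc₂pos.ne'
    have e0 : (0:ℝ)/c₂ = 0 := by simp
    have eT : T/c₂ = s := by rw [hT]; field_simp
    rw [step1, e0, eT, intervalIntegral.integral_comp_sub_left (fun u => u ^ r) s,
      sub_self, sub_zero, integral_rpow (Or.inl hrneg1), hr1,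
      Real.zero_rpow h2H.ne', sub_zero, smul_eq_mul]
  have hxex : ((n:ℝ)^2 * s) * Real.exp (-((n:ℝ)^2 * s)) ≤ 1 := by
    have h := Real.add_one_le_exp ((n:ℝ)^2 * s)
    have hep := Real.exp_pos ((n:ℝ)^2 * s)
    rw [Real.exp_neg, ← div_eq_mul_inv, div_le_one hep]
    linarith
  have hsr : s ^ r ≤ t₀ ^ r := Real.rpow_le_rpow_of_nonpos ht₀ hs hr0
  have hsplit2 : B * (c₂ * (s ^ (2 * H) / (2 * H))) ≤ (t₀ ^ r) ^ 2 / H := by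
    have h1r : 1 + r ≠ 0 := by intro h; rw [hr] at h; linarith
    have hs2H : s ^ (2 * H) = s * s ^ r := by
      rw [← Real.rpow_one_add' hspos.le h1r]
      congr 1; rw [hr]; ring
    have ht₀r : (0:ℝ) < t₀ ^ r := Real.rpow_pos_of_pos ht₀ r
    have hsrpos : (0:ℝ) < s ^ r := Real.rpow_pos_of_pos hspos r
    rw [hB, hs2H, hc₂]
    have key : t₀ ^ r * Real.exp (-((n:ℝ)^2 * s)) * (2 * (n:ℝ)^2 * (s * s ^ r / (2 * H)))
        = t₀ ^ r * s ^ r * (((n:ℝ)^2 * s) * Real.exp (-((n:ℝ)^2 * s))) / H := by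
      field_simp
    rw [key]
    rw [div_le_div_iff₀ hH0 hH0]
    have h1 : t₀ ^ r * s ^ r * (((n:ℝ)^2 * s) * Real.exp (-((n:ℝ)^2 * s)))
        ≤ t₀ ^ r * t₀ ^ r * 1 := by
      apply mul_le_mul _ hxex (by positivity) (by positivity)
      exact mul_le_mul_of_nonneg_left hsr ht₀r.le
    calc t₀ ^ r * s ^ r * (((n:ℝ)^2 * s) * Real.exp (-((n:ℝ)^2 * s))) * H
        ≤ t₀ ^ r * t₀ ^ r * 1 * H := mul_le_mul_of_nonneg_right h1 hH0.le
      _ = (t₀ ^ r) ^ 2 * H := by ring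
  calc (∫ v in (0:ℝ)..T, f v) ≤ ∫ v in (0:ℝ)..T, g v := hmono
    _ = A * (∫ v in (0:ℝ)..T, Real.exp (-v) * v ^ r)
        + B * ∫ v in (0:ℝ)..T, (s - v / c₂) ^ r := hgsplit
    _ ≤ A * Real.Gamma (2 * H) + (t₀ ^ r) ^ 2 / H := by
        apply add_le_add
        · exact mul_le_mul_of_nonneg_left hI1 hApos.le
        · rw [hI2]; exact hsplit2
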